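/- Let α > 0 be a real parameter. Define f(x₀, x₁) = (α x₁ + 1)/(x₁ x₀) and ι(x₀, x₁) = x₁ + x₀ + α/x₁ + α/x₀ + 1/(x₁ x₀) for nonzero reals x₀, x₁. Then for all x₀, x₁ with x₀ ≠ 0, x₁ ≠ 0, and f(x₀, x₁) ≠ 0: ι(x₁, f(x₀, x₁)) = ι(x₀, x₁). -/

import Mathlib

theorem stmt_17 (α : ℝ) (hα : 0 < α) :
    let f : ℝ → ℝ → ℝ := fun x₀ x₁ => (α * x₁ + 1) / (x₁ * x₀)
    let ι : ℝ → ℝ → ℝ := fun x₀ x₁ => x₁ + x₀ + α / x₁ + α / x₀ + 1 / (x₁ * x₀)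
    ∀ x₀ x₁ : ℝ, x₀ ≠ 0 → x₁ ≠ 0 → f x₀ x₁ ≠ 0 → ι x₁ (f x₀ x₁) = ι x₀ x₁ := by
  intro f ι x₀ x₁ h₀ h₁ hf
  have hn : α * x₁ + 1 ≠ 0 := by
    intro h
    apply hf
    simp [f, h]
  simp only [f, ι]
  field_simp
  ring
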